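/- Let a maximal position on a path of length n ≥ 4 be given where instead of requiring the end edges to be directed, each end edge either is directed (giving an explicit signal) or is unmarkable with a forced implicit signal determined by its neighboring edge. Then the parity of the number of unmarkable edges on the path is determined by the pair of signals (explicit or implicit) exactly as in the explicit case: signals agreeing in direction along the path give even parity, disagreeing signals give odd parity. -/
import Mathlib


/-- Legality of a position on a path with edges `1, …, n` (edge `i` joins `v_{i-1}` to `v_i`;
`some true` = directed toward `v_i`, `some false` = toward `v_{i-1}`, `none` = undirected);
no internal vertex `v_1, …, v_{n-1}` may be a sink or a source. -/
def PathLegal (n : ℕ) (pos : ℕ → Option Bool) : Prop :=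
  ∀ i : ℕ, 1 ≤ i → i + 1 ≤ n →
    ¬(pos i = some true ∧ pos (i + 1) = some false) ∧
    ¬(pos i = some false ∧ pos (i + 1) = some true)

/-- Parity of unmarkable edges with explicit or implicit end signals, on a path with
`n ≥ 4` edges.  Each end edge is either directed (its direction along the path being its
explicit signal `s1`, resp. `sn`) or is unmarkable (`none`), in which case its implicit signal
is the unique direction it would have to receive to avoid a sink or source at the adjacent
internal vertex; since the adjacent secondary edge must then carry the opposite direction,
this is encoded by `pos 2 = some (!s1)` (resp. `pos (n-1) = some (!sn)`).  All interior
undirected edges are unmarkable (maximal position).  Then the total number of unmarkable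
(undirected) edges is even iff the two signals agree: equal signals give even parity,
unequal signals give odd parity. -/
theorem path_signal_parity (n : ℕ) (hn : 4 ≤ n) (pos : ℕ → Option Bool) (s1 sn : Bool)
    (hlegal : PathLegal n pos)
    (hleft : pos 1 = some s1 ∨ (pos 1 = none ∧ pos 2 = some (!s1)))
    (hright : pos n = some sn ∨ (pos n = none ∧ pos (n - 1) = some (!sn)))
    (hmax : ∀ i : ℕ, 2 ≤ i → i ≤ n - 1 → pos i = none →
      ∀ b : Bool, ¬ PathLegal n (Function.update pos i (some b))) :
    (s1 = sn → Even (((Finset.Icc 1 n).filter fun i => pos i = none).card)) ∧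
    (s1 ≠ sn → Odd (((Finset.Icc 1 n).filter fun i => pos i = none).card)) := by
  set N : ℕ → ℕ := fun i => ((Finset.Icc 1 i).filter fun j => pos j = none).card with hNdef
  have hstep : ∀ i : ℕ, 1 ≤ i →
      N i = N (i - 1) + (if pos i = none then 1 else 0) := by
    intro i hi
    have hins : Finset.Icc 1 i = insert i (Finset.Icc 1 (i - 1)) := by
      ext j; simp only [Finset.mem_Icc, Finset.mem_insert]; omega
    have hnm : i ∉ Finset.Icc 1 (i - 1) := by simp only [Finset.mem_Icc]; omega
    simp only [hNdef, hins, Finset.filter_insert]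
    split
    · rw [Finset.card_insert_of_notMem (fun h => hnm (Finset.mem_of_mem_filter i h))]
    · rfl
  have claim : ∀ i, 1 ≤ i → i ≤ n → ∀ b, pos i = some b →
      ((b = s1) ↔ Even (N i)) := by
    intro i
    induction i using Nat.strong_induction_on with
    | _ i ih =>
      intro hi1 hin b hb
      rcases Nat.lt_or_ge i 3 with hi3 | hi3
      · -- i = 1 or i = 2
        interval_cases i
        · rcases hleft with h | ⟨h, _⟩
          · rw [hb] at h
            have hb1 : b = s1 := by injection h
            have : N 1 = 0 := by
              rw [hstep 1 le_rfl]
              simp [hNdef, hb]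
            simp [hb1, this]
          · rw [hb] at h; simp at h
        · rcases hleft with h | ⟨h1, h2⟩
          · -- pos 1 = some s1, legality forces b = s1
            have hleg := hlegal 1 le_rfl (by omega)
            have hb1 : b = s1 := by
              rcases s1 <;> rcases b <;> simp_all
            have hN2 : N 2 = 0 := by
              rw [hstep 2 (by omega), hstep 1 le_rfl]
              simp [hNdef, hb, h]
            simp [hb1, hN2]
          · rw [hb] at h2
            have hb1 : b = !s1 := by injection h2
            have hN2 : N 2 = 1 := by
              rw [hstep 2 (by omega), hstep 1 le_rfl]
              simp [hNdef, hb, h1]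
            rw [hN2]
            rcases s1 <;> simp [hb1, Nat.even_iff]
      · -- i ≥ 3
        have hi1' : i - 1 + 1 = i := by omega
        rcases hc : pos (i - 1) with _ | c
        · -- pos (i-1) = none; maximality forces pos (i-2) = some !b
          have h2 : pos (i - 2) = some (!b) := by
            by_contra hcon
            refine hmax (i - 1) (by omega) (by omega) hc b ?_
            intro j hj1 hj2
            rcases eq_or_ne j (i - 1) with rfl | hne
            · rw [Function.update_self, hi1',
                Function.update_of_ne (by omega) _ _, hb]
              constructor <;> rintro ⟨ha, hbb⟩ <;>
                (injection ha with ha; injection hbb with hbb; simp_all)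
            · rw [Function.update_of_ne hne]
              rcases eq_or_ne (j + 1) (i - 1) with hje | hne'
              · have hj' : j = i - 2 := by omega
                rw [hje, Function.update_self]
                subst hj'
                constructor <;> rintro ⟨ha, hbb⟩ <;>
                  (injection hbb with hbb; subst hbb; simp_all)
              · rw [Function.update_of_ne hne']
                exact hlegal j hj1 hj2
          have hIH := ih (i - 2) (by omega) (by omega) (by omega) (!b) h2
          have hN : N i = N (i - 2) + 1 := by
            have e1 := hstep i (by omega)
            have e2 := hstep (i - 1) (by omega)
            have : i - 1 - 1 = i - 2 := by omega
            rw [this] at e2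
            rw [e1, e2]
            simp [hb, hc]
          rw [hN, Nat.even_add_one, ← hIH]
          rcases b <;> rcases s1 <;> simp
        · -- pos (i-1) = some c; legality forces b = c
          have hleg := hlegal (i - 1) (by omega) (by omega)
          rw [hi1', hc, hb] at hleg
          have hbc : b = c := by rcases b <;> rcases c <;> simp_all
          subst hbc
          have hIH := ih (i - 1) (by omega) (by omega) (by omega) b hc
          have hN : N i = N (i - 1) := by
            rw [hstep i (by omega)]; simp [hb]
          rw [hN]; exact hIH
  have key : (s1 = sn) ↔ Even (N n) := by
    rcases hright with h | ⟨h1, h2⟩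
    · rw [← claim n (by omega) le_rfl sn h, eq_comm]
    · have hIH := claim (n - 1) (by omega) (by omega) (!sn) h2
      have hN : N n = N (n - 1) + 1 := by
        rw [hstep n (by omega)]; simp [h1]
      rw [hN, Nat.even_add_one, ← hIH]
      rcases s1 <;> rcases sn <;> simp
  refine ⟨fun h => key.mp h, fun h => ?_⟩
  rw [← Nat.not_even_iff_odd]
  exact fun he => h (key.mpr he)
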